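/- arXiv:1802.02118 — 3 statements merged into one kernel-verified Lean document; each statement's English description precedes it below -/
import Mathlib

section
/- A bijective continuous linear operator T on a locally convex Hausdorff space X is doubly power bounded (the family {T^k : k ∈ ℤ} is equicontinuous) if and only if there exists a family Γ of continuous seminorms generating the topology of X such that p(Tx) = p(x) for all p ∈ Γ and all x ∈ X. -/
open scoped NNReal


/-- A bijective continuous linear operator `T` on a locally convex Hausdorff space is
doubly power bounded (i.e. it has a continuous linear inverse `S` and the family of all
integer powers — the natural powers of `T` together with the natural powers of `S` — is
equicontinuous) if and only if there is a family `Γ` of continuous seminorms generating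
the topology such that `p (T x) = p x` for all `p ∈ Γ` and `x`. -/
theorem stmt_4 (X : Type*) [AddCommGroup X] [Module ℂ X] [Module ℝ X]
    [IsScalarTower ℝ ℂ X] [TopologicalSpace X] [IsTopologicalAddGroup X]
    [ContinuousSMul ℂ X] [T2Space X] [LocallyConvexSpace ℝ X]
    (T : X →L[ℂ] X) (hbij : Function.Bijective T) :
    (∃ S : X →L[ℂ] X, (∀ x, S (T x) = x) ∧ (∀ x, T (S x) = x) ∧
      ∀ q : Seminorm ℂ X, Continuous q → ∃ p : Seminorm ℂ X, Continuous p ∧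
        (∀ (n : ℕ) (x : X), q ((T ^ n) x) ≤ p x) ∧
        (∀ (n : ℕ) (x : X), q ((S ^ n) x) ≤ p x)) ↔
    (∃ Γ : Set (Seminorm ℂ X), (∀ p ∈ Γ, Continuous p) ∧
      (∀ q : Seminorm ℂ X, Continuous q →
        ∃ p ∈ Γ, ∃ c : ℝ, 0 < c ∧ ∀ x, q x ≤ c * p x) ∧
      ∀ p ∈ Γ, ∀ x, p (T x) = p x) := by
  constructor
  · rintro ⟨S, hS1, hS2, h⟩
    refine ⟨{p : Seminorm ℂ X | Continuous p ∧ ∀ x, p (T x) = p x},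
      fun p hp => hp.1, ?_, fun p hp => hp.2⟩
    intro q hq
    obtain ⟨p, hpc, hT, hS⟩ := h q hq
    set g : ℕ → Seminorm ℂ X := fun n =>
      q.comp (T ^ n : X →L[ℂ] X).toLinearMap ⊔ q.comp (S ^ n : X →L[ℂ] X).toLinearMap with hg
    have hgapp : ∀ n x, g n x = max (q ((T ^ n) x)) (q ((S ^ n) x)) := by
      intro n x; simp only [hg, Seminorm.sup_apply, Seminorm.comp_apply, ContinuousLinearMap.coe_coe]
    have hgle : ∀ n, g n ≤ p := by
      intro n
      rw [Seminorm.le_def]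
      intro x
      rw [hgapp]
      exact max_le (hT n x) (hS n x)
    have hb : BddAbove (Set.range g) := ⟨p, by rintro _ ⟨n, rfl⟩; exact hgle n⟩
    set P : Seminorm ℂ X := ⨆ n, g n with hP
    have hPapp : ∀ x, P x = ⨆ n, g n x := by
      intro x
      rw [hP, ← Seminorm.iSup_apply hb]
    have hbx : ∀ x, BddAbove (Set.range fun n => g n x) := by
      intro x
      exact ⟨p x, by rintro _ ⟨n, rfl⟩; exact hgle n x⟩
    have hlePx : ∀ n x, g n x ≤ P x := by
      intro n x
      rw [hPapp]
      exact le_ciSup (hbx x) n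
    have hPle : ∀ x, P x ≤ p x := by
      intro x
      rw [hPapp]
      exact ciSup_le fun n => hgle n x
    -- P (T x) ≤ P x
    have key1 : ∀ x, P (T x) ≤ P x := by
      intro x
      rw [hPapp]
      refine ciSup_le fun n => ?_
      rw [hgapp]
      refine max_le ?_ ?_
      · have : (T ^ n) (T x) = (T ^ (n + 1)) x := by
          rw [pow_succ, ContinuousLinearMap.mul_apply]
        rw [this]
        exact le_trans (le_max_left _ _) ((hgapp (n+1) x) ▸ hlePx (n+1) x)
      · rcases n with _ | m
        · have : (S ^ 0) (T x) = (T ^ 1) x := by simp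
          rw [this]
          exact le_trans (le_max_left _ _) ((hgapp 1 x) ▸ hlePx 1 x)
        · have : (S ^ (m + 1)) (T x) = (S ^ m) x := by
            rw [pow_succ, ContinuousLinearMap.mul_apply, hS1]
          rw [this]
          exact le_trans (le_max_right _ _) ((hgapp m x) ▸ hlePx m x)
    have key2 : ∀ x, P (S x) ≤ P x := by
      intro x
      rw [hPapp]
      refine ciSup_le fun n => ?_
      rw [hgapp]
      refine max_le ?_ ?_
      · rcases n with _ | m
        · have : (T ^ 0) (S x) = (S ^ 1) x := by simp
          rw [this]
          exact le_trans (le_max_right _ _) ((hgapp 1 x) ▸ hlePx 1 x)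
        · have : (T ^ (m + 1)) (S x) = (T ^ m) x := by
            rw [pow_succ, ContinuousLinearMap.mul_apply, hS2]
          rw [this]
          exact le_trans (le_max_left _ _) ((hgapp m x) ▸ hlePx m x)
      · have : (S ^ n) (S x) = (S ^ (n + 1)) x := by
          rw [pow_succ, ContinuousLinearMap.mul_apply]
        rw [this]
        exact le_trans (le_max_right _ _) ((hgapp (n+1) x) ▸ hlePx (n+1) x)
    have hPinv : ∀ x, P (T x) = P x := by
      intro x
      refine le_antisymm (key1 x) ?_
      have := key2 (T x)
      rwa [hS1] at this
    have hPcont : Continuous P :=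
      Seminorm.continuous_of_le hpc (Seminorm.le_def.mpr hPle)
    refine ⟨P, ⟨hPcont, hPinv⟩, 1, one_pos, fun x => ?_⟩
    rw [one_mul]
    have : q x = g 0 x := by simp [hgapp]
    rw [this]
    exact hlePx 0 x
  · rintro ⟨Γ, hΓc, hΓgen, hΓinv⟩
    haveI : ContinuousSMul ℝ X := by
      refine ⟨?_⟩
      have heq : (fun p : ℝ × X => p.1 • p.2) = fun p : ℝ × X => ((p.1 : ℂ)) • p.2 := by
        funext p
        rw [← smul_one_smul ℂ p.1 p.2]
        norm_num
      rw [heq]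
      exact (Complex.continuous_ofReal.comp continuous_fst).smul continuous_snd
    haveI : SMulCommClass ℝ ℂ X := by
      refine ⟨fun r c x => ?_⟩
      rw [← smul_one_smul ℂ r x, ← smul_one_smul ℂ r (c • x), smul_smul, smul_smul, mul_comm]
    open ComplexOrder in
    haveI : LocallyConvexSpace ℂ X := ⟨fun x => (LocallyConvexSpace.convex_basis (𝕜 := ℝ) x).congr
      (fun s => by rw [convex_RCLike_iff_convex_real (K := ℂ)]) (fun _ _ => rfl)⟩
    have hW : WithSeminorms (gaugeSeminormFamily ℂ X) := with_gaugeSeminormFamily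
    set e : X ≃ₗ[ℂ] X := LinearEquiv.ofBijective T.toLinearMap hbij with he
    have heT : ∀ x, e x = T x := fun x => rfl
    have hTe : ∀ x, T (e.symm x) = x := fun x => e.apply_symm_apply x
    have heTx : ∀ x, e.symm (T x) = x := fun x => e.symm_apply_apply x
    -- invariance transferred to the inverse
    have hΓinv' : ∀ p ∈ Γ, ∀ x, p (e.symm x) = p x := by
      intro p hp x
      conv_rhs => rw [← hTe x]
      rw [hΓinv p hp]
    -- continuity of the inverse
    have hcont : Continuous e.symm := by
      refine Seminorm.continuous_from_bounded hW hW e.symm.toLinearMap ?_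
      intro i
      have hqi : Continuous (gaugeSeminormFamily ℂ X i) := hW.continuous_seminorm i
      obtain ⟨p, hpΓ, c, hc, hqp⟩ := hΓgen _ hqi
      obtain ⟨s, C, hC0, hpC⟩ := Seminorm.bound_of_continuous hW p (hΓc p hpΓ)
      refine ⟨s, c.toNNReal * C, ?_⟩
      rw [Seminorm.le_def]
      intro x
      rw [Seminorm.comp_apply]
      calc (gaugeSeminormFamily ℂ X i) (e.symm.toLinearMap x)
          ≤ c * p (e.symm x) := hqp _
        _ = c * p x := by rw [hΓinv' p hpΓ]
        _ ≤ c * (C • s.sup (gaugeSeminormFamily ℂ X)) x := by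
            have := hpC x
            nlinarith [hpC x, hc]
        _ = ((c.toNNReal * C : ℝ≥0) • s.sup (gaugeSeminormFamily ℂ X)) x := by
            rw [Seminorm.smul_apply, Seminorm.smul_apply, NNReal.smul_def, NNReal.smul_def]
            push_cast
            rw [Real.coe_toNNReal c hc.le, smul_eq_mul, smul_eq_mul, mul_assoc]
    set S : X →L[ℂ] X := ⟨e.symm.toLinearMap, hcont⟩ with hS
    have hSapp : ∀ x, S x = e.symm x := fun x => rfl
    refine ⟨S, fun x => heTx x, fun x => hTe x, ?_⟩
    intro q hq
    obtain ⟨p, hpΓ, c, hc, hqp⟩ := hΓgen q hq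
    have hTn : ∀ (n : ℕ) (x : X), p ((T ^ n) x) = p x := by
      intro n
      induction n with
      | zero => intro x; simp
      | succ m ih =>
        intro x
        rw [pow_succ, ContinuousLinearMap.mul_apply, ih, hΓinv p hpΓ]
    have hSn : ∀ (n : ℕ) (x : X), p ((S ^ n) x) = p x := by
      intro n
      induction n with
      | zero => intro x; simp
      | succ m ih =>
        intro x
        rw [pow_succ, ContinuousLinearMap.mul_apply, ih, hSapp, hΓinv' p hpΓ]
    refine ⟨c.toNNReal • p, ?_, ?_, ?_⟩
    · have : ⇑(c.toNNReal • p) = fun x => c * p x := by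
        funext x
        rw [Seminorm.smul_apply, NNReal.smul_def, Real.coe_toNNReal c hc.le, smul_eq_mul]
      rw [this]
      exact continuous_const.mul (hΓc p hpΓ)
    · intro n x
      rw [Seminorm.smul_apply, NNReal.smul_def, Real.coe_toNNReal c hc.le, smul_eq_mul]
      calc q ((T ^ n) x) ≤ c * p ((T ^ n) x) := hqp _
        _ = c * p x := by rw [hTn]
    · intro n x
      rw [Seminorm.smul_apply, NNReal.smul_def, Real.coe_toNNReal c hc.le, smul_eq_mul]
      calc q ((S ^ n) x) ≤ c * p ((S ^ n) x) := hqp _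
        _ = c * p x := by rw [hSn]
end

section
/- If X is a Hausdorff locally convex space over ℂ with dim X ≥ 2 and T : X → X is a doubly power bounded continuous linear bijection, then T is not supercyclic. -/
set_option linter.unusedSectionVars false

section AuxLemmas

variable {E : Type*} [AddCommGroup E] [Module ℂ E] [TopologicalSpace E]
  [IsTopologicalAddGroup E] [ContinuousSMul ℂ E]

/-- An invariant continuous seminorm obtained as a supremum over the ℤ-orbit of a
continuous linear automorphism. -/
lemma aux_invariant_seminorm (e : E ≃L[ℂ] E) (q p : Seminorm ℂ E) (hp : Continuous ⇑p)
    (hb : ∀ (k : ℤ) (y : E), q ((e ^ k) y) ≤ p y) :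
    ∃ Q : Seminorm ℂ E, Continuous ⇑Q ∧ (∀ y, q y ≤ Q y) ∧ (∀ y, Q (e y) = Q y) := by
  have bdd : ∀ y : E, BddAbove (Set.range fun k : ℤ => q ((e ^ k) y)) :=
    fun y => ⟨p y, by rintro r ⟨k, rfl⟩; exact hb k y⟩
  set Q0 : E → ℝ := fun y => ⨆ k : ℤ, q ((e ^ k) y) with hQ0
  have hle : ∀ y, Q0 y ≤ p y := fun y => ciSup_le fun k => hb k y
  have hge : ∀ y, q y ≤ Q0 y := by
    intro y
    have h0 : q ((e ^ (0:ℤ)) y) = q y := by rw [zpow_zero]; rfl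
    exact h0 ▸ le_ciSup (bdd y) 0
  have hadd : ∀ y z : E, Q0 (y + z) ≤ Q0 y + Q0 z := by
    intro y z
    refine ciSup_le fun k => ?_
    have : q ((e ^ k) (y + z)) ≤ q ((e ^ k) y) + q ((e ^ k) z) := by
      rw [map_add]; exact map_add_le_add q _ _
    exact this.trans (add_le_add (le_ciSup (bdd y) k) (le_ciSup (bdd z) k))
  have hsmul : ∀ (a : ℂ) (y : E), Q0 (a • y) = ‖a‖ * Q0 y := by
    intro a y
    have h1 : (fun k : ℤ => q ((e ^ k) (a • y))) = fun k : ℤ => ‖a‖ * q ((e ^ k) y) := by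
      funext k; rw [map_smul, map_smul_eq_mul]
    simp only [hQ0, h1]
    rw [← Real.mul_iSup_of_nonneg (norm_nonneg a)]
  refine ⟨Seminorm.of Q0 hadd hsmul, ?_, hge, ?_⟩
  · exact Seminorm.continuous_of_le hp (fun y => hle y)
  · intro y
    apply le_antisymm
    · refine ciSup_le fun k => ?_
      have h1 : q ((e ^ k) (e y)) = q ((e ^ (k + 1)) y) := by rw [zpow_add_one]; rfl
      exact h1 ▸ le_ciSup (bdd y) (k + 1)
    · refine ciSup_le fun k => ?_
      have h1 : q ((e ^ k) y) = q ((e ^ (k - 1)) (e y)) := by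
        have h2 : (e ^ (k - 1)) (e y) = (e ^ k) y := by
          rw [sub_eq_add_neg, zpow_add, zpow_neg_one]
          show (e ^ k) ((e⁻¹ * e) y) = (e ^ k) y
          rw [inv_mul_cancel]; rfl
        rw [h2]
      exact h1 ▸ le_ciSup (bdd (e y)) (k - 1)

lemma aux_csmul_real [Module ℝ E] [IsScalarTower ℝ ℂ E] : ContinuousSMul ℝ E := by
  constructor
  have h : (fun p : ℝ × E => p.1 • p.2) = fun p : ℝ × E => ((p.1 : ℂ)) • p.2 := by
    funext p
    rw [← one_smul ℂ p.2, ← smul_assoc]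
    norm_num
  rw [h]
  exact (Complex.continuous_ofReal.comp continuous_fst).smul continuous_snd

/-- In a locally convex Hausdorff space, continuous complex seminorms separate points. -/
lemma aux_seminorm_separation [Module ℝ E] [IsScalarTower ℝ ℂ E] [T2Space E]
    [LocallyConvexSpace ℝ E] {w : E} (hw : w ≠ 0) :
    ∃ q : Seminorm ℂ E, Continuous ⇑q ∧ q w ≠ 0 := by
  haveI : ContinuousSMul ℝ E := aux_csmul_real
  obtain ⟨f, hf⟩ := SeparatingDual.exists_ne_zero (R := ℝ) hw
  set g : E →ₗ[ℂ] ℂ := LinearMap.extendTo𝕜' f.toLinearMap with hg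
  refine ⟨(normSeminorm ℂ ℂ).comp g, ?_, ?_⟩
  · have hco : ⇑((normSeminorm ℂ ℂ).comp g) = fun y => ‖g y‖ := rfl
    rw [hco]
    have hgc : Continuous fun y : E => g y := by
      have : (fun y : E => g y)
          = fun y => ((f y : ℂ) - (RCLike.I : ℂ) * (f ((RCLike.I : ℂ) • y) : ℂ)) := by
        funext y; exact LinearMap.extendTo𝕜'_apply f.toLinearMap y
      rw [this]
      exact (Complex.continuous_ofReal.comp f.continuous).sub
        (continuous_const.mul (Complex.continuous_ofReal.comp
          (f.continuous.comp (continuous_const_smul _))))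
    exact hgc.norm
  · have hre : RCLike.re (g w) = f w := LinearMap.extendTo𝕜'_apply_re f.toLinearMap w
    have hgw : g w ≠ 0 := by
      intro h0
      rw [h0] at hre
      simp at hre
      exact hf hre.symm
    simpa using hgw

lemma aux_seminorm_pow_invariant (T : E →L[ℂ] E) (r : Seminorm ℂ E)
    (hrT : ∀ w, r (T w) = r w) (x : E) : ∀ n : ℕ, r ((T ^ n) x) = r x := by
  intro n
  induction n with
  | zero => rw [pow_zero]; rfl
  | succ n ih =>
    have : (T ^ (n + 1)) x = T ((T ^ n) x) := by rw [pow_succ']; rfl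
    rw [this, hrT, ih]

lemma aux_seminorm_approx (r : Seminorm ℂ E) {y w : E} {a ε : ℝ} (hrw : r w = a)
    (h3 : r (y - w) ≤ ε) : |r y - a| ≤ ε := by
  rw [← hrw]
  have e1 : w + (y - w) = y := by abel
  have h1 : r y ≤ r w + r (y - w) := by
    calc r y = r (w + (y - w)) := by rw [e1]
    _ ≤ r w + r (y - w) := map_add_le_add r _ _
  have e2 : y + (w - y) = w := by abel
  have h2 : r w ≤ r y + r (y - w) := by
    calc r w = r (y + (w - y)) := by rw [e2]
    _ ≤ r y + r (w - y) := map_add_le_add r _ _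
    _ = r y + r (y - w) := by rw [← neg_sub y w, map_neg_eq_map]
  rw [abs_sub_le_iff]
  constructor <;> linarith

/-- Two continuous `T`-invariant seminorms are proportional along a supercyclic orbit. -/
lemma aux_prop (T : E →L[ℂ] E) (x : E)
    (hdense : Dense {y : E | ∃ (c : ℂ) (n : ℕ), y = c • (T ^ n) x})
    (r p : Seminorm ℂ E) (hr : Continuous ⇑r) (hp : Continuous ⇑p)
    (hrT : ∀ w, r (T w) = r w) (hpT : ∀ w, p (T w) = p w) (y : E) :
    r y * p x = p y * r x := by
  have key : ∀ ε : ℝ, 0 < ε → |r y * p x - p y * r x| ≤ ε * (p x + r x) := by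
    intro ε hε
    set U : Set E := {w | r (w - y) + p (w - y) < ε} with hU
    have hUopen : IsOpen U := by
      have hc : Continuous fun w : E => r (w - y) + p (w - y) :=
        (hr.comp (continuous_id.sub continuous_const)).add
          (hp.comp (continuous_id.sub continuous_const))
      exact isOpen_lt hc continuous_const
    have hUy : y ∈ U := by
      simp only [hU, Set.mem_setOf_eq, sub_self, map_zero, add_zero]
      exact hε
    obtain ⟨w, hwD, hwU⟩ := hdense.exists_mem_open hUopen ⟨y, hUy⟩
    obtain ⟨c, n, rfl⟩ := hwD
    simp only [hU, Set.mem_setOf_eq] at hwU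
    have hrw : r (c • (T ^ n) x) = ‖c‖ * r x := by
      rw [map_smul_eq_mul, aux_seminorm_pow_invariant T r hrT]
    have hpw : p (c • (T ^ n) x) = ‖c‖ * p x := by
      rw [map_smul_eq_mul, aux_seminorm_pow_invariant T p hpT]
    set w := c • (T ^ n) x
    have hsub : r (y - w) ≤ ε ∧ p (y - w) ≤ ε := by
      rw [← neg_sub w y, map_neg_eq_map, map_neg_eq_map]
      constructor
      · exact le_trans (le_add_of_nonneg_right (apply_nonneg p _)) hwU.le
      · exact le_trans (le_add_of_nonneg_left (apply_nonneg r _)) hwU.le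
    have hrdiff : |r y - ‖c‖ * r x| ≤ ε := aux_seminorm_approx r hrw hsub.1
    have hpdiff : |p y - ‖c‖ * p x| ≤ ε := aux_seminorm_approx p hpw hsub.2
    have hid : r y * p x - p y * r x
        = (r y - ‖c‖ * r x) * p x - (p y - ‖c‖ * p x) * r x := by ring
    rw [hid]
    calc |(r y - ‖c‖ * r x) * p x - (p y - ‖c‖ * p x) * r x|
        ≤ |(r y - ‖c‖ * r x) * p x| + |(p y - ‖c‖ * p x) * r x| := abs_sub _ _
      _ = |r y - ‖c‖ * r x| * p x + |p y - ‖c‖ * p x| * r x := by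
          rw [abs_mul, abs_mul, abs_of_nonneg (apply_nonneg p x), abs_of_nonneg (apply_nonneg r x)]
      _ ≤ ε * p x + ε * r x :=
          add_le_add (mul_le_mul_of_nonneg_right hrdiff (apply_nonneg p x))
            (mul_le_mul_of_nonneg_right hpdiff (apply_nonneg r x))
      _ = ε * (p x + r x) := by ring
  by_contra hne
  have habs : 0 < |r y * p x - p y * r x| := abs_pos.mpr (sub_ne_zero.mpr hne)
  set A := |r y * p x - p y * r x|
  set c := p x + r x with hc
  have hc0 : 0 ≤ c := add_nonneg (apply_nonneg p x) (apply_nonneg r x)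
  have h1 : A ≤ (A / (2 * c + 1)) * c := key _ (by positivity)
  rw [div_mul_eq_mul_div, le_div_iff₀ (by linarith)] at h1
  nlinarith

lemma aux_KL (pb : Seminorm ℂ E) (B : E →L[ℂ] E) (H : ℂ → ℝ)
    (hH : ∀ (r : ℂ) (y : E),
      pb ((Polynomial.aeval B (Polynomial.X - Polynomial.C r)) y) = H r * pb y) :
    ∀ (s : Multiset ℂ) (y : E),
      pb ((Polynomial.aeval B ((s.map (fun r => Polynomial.X - Polynomial.C r)).prod)) y)
        = (s.map H).prod * pb y := by
  intro s
  induction s using Multiset.induction_on with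
  | empty => intro y; simp
  | cons a s ih =>
    intro y
    rw [Multiset.map_cons, Multiset.prod_cons, Multiset.map_cons, Multiset.prod_cons, map_mul]
    have h2 : ((Polynomial.aeval B (Polynomial.X - Polynomial.C a))
          * (Polynomial.aeval B ((s.map (fun r => Polynomial.X - Polynomial.C r)).prod))) y
        = (Polynomial.aeval B (Polynomial.X - Polynomial.C a))
          ((Polynomial.aeval B ((s.map (fun r => Polynomial.X - Polynomial.C r)).prod)) y) := rfl
    rw [h2, hH, ih, mul_assoc]

/-- Gelfand–Mazur-type argument: the multiplicative function `h` has a zero. -/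
lemma aux_exists_root (pb : Seminorm ℂ E) (hpbc : Continuous ⇑pb) (T : E →L[ℂ] E) (x : E)
    (hx : 0 < pb x) (h : ℂ → ℝ)
    (hA : ∀ (μ : ℂ) (y : E), pb (T y - μ • y) = h μ * pb y) :
    ∃ lam : ℂ, h lam = 0 := by
  set K : ℝ := pb (T x) / pb x with hK
  have hnonneg : ∀ μ, 0 ≤ h μ := by
    intro μ
    have := hA μ x
    nlinarith [apply_nonneg pb (T x - μ • x)]
  have hcoer : ∀ μ : ℂ, ‖μ‖ - K ≤ h μ := by
    intro μ
    have h1 : pb (μ • x) ≤ pb (T x - μ • x) + pb (T x) := by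
      have h2 : pb (μ • x) = pb (T x - (T x - μ • x)) := by congr 1; abel
      rw [h2]
      rw [sub_eq_add_neg]
      exact (map_add_le_add pb _ _).trans (by rw [map_neg_eq_map, add_comm])
    rw [map_smul_eq_mul, hA] at h1
    have h4 : (‖μ‖ - K) * pb x ≤ h μ * pb x := by
      rw [hK, sub_mul, div_mul_cancel₀ _ hx.ne']
      linarith
    exact le_of_mul_le_mul_right h4 hx
  have hcont : Continuous h := by
    have hfun : h = fun μ => pb (T x - μ • x) / pb x := by
      funext μ; rw [hA μ x]; field_simp
    rw [hfun]
    exact (hpbc.comp (continuous_const.sub (continuous_id.smul continuous_const))).div_const _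
  have hlim : Filter.Tendsto h (Filter.cocompact ℂ) Filter.atTop := by
    apply Filter.tendsto_atTop_mono hcoer
    exact Filter.tendsto_atTop_add_const_right _ (-K) tendsto_norm_cocompact_atTop
  obtain ⟨lam0, hmin⟩ := hcont.exists_forall_le hlim
  set m : ℝ := h lam0 with hm
  by_cases hm0 : m = 0
  · exact ⟨lam0, hm0⟩
  have hmpos : 0 < m := lt_of_le_of_ne (hnonneg lam0) (Ne.symm hm0)
  exfalso
  have hbound : ∀ (lam1 μ : ℂ), h lam1 = m → ∀ k : ℕ,
      h μ * m ^ k ≤ m ^ (k+1) + ‖μ - lam1‖ ^ (k+1) := by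
    intro lam1 μ hlam1 k
    set B : E →L[ℂ] E := T - lam1 • 1 with hB
    set ε : ℂ := μ - lam1 with hε
    have hBy : ∀ (r : ℂ) (y : E), (B - r • (1 : E →L[ℂ] E)) y = T y - (lam1 + r) • y := by
      intro r y
      show (T - lam1 • 1 - r • 1) y = T y - (lam1 + r) • y
      simp [ContinuousLinearMap.sub_apply, ContinuousLinearMap.smul_apply,
        ContinuousLinearMap.one_apply, add_smul]
      abel
    have hAop : ∀ (r : ℂ) (y : E),
        pb ((Polynomial.aeval B (Polynomial.X - Polynomial.C r)) y) = h (lam1 + r) * pb y := by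
      intro r y
      have e1 : (Polynomial.aeval B (Polynomial.X - Polynomial.C r)) = B - r • 1 := by
        simp [Algebra.algebraMap_eq_smul_one]
      rw [e1, hBy, hA]
    have hpow : ∀ (j : ℕ) (y : E), pb ((B ^ j) y) = m ^ j * pb y := by
      intro j
      induction j with
      | zero => intro y; simp
      | succ j ih =>
        intro y
        have e1 : (B ^ (j+1)) y = B ((B ^ j) y) := by rw [pow_succ']; rfl
        have e2 : ∀ w, pb (B w) = m * pb w := by
          intro w
          have : B w = T w - lam1 • w := by
            show (T - lam1 • 1) w = T w - lam1 • w
            simp [ContinuousLinearMap.sub_apply, ContinuousLinearMap.smul_apply,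
              ContinuousLinearMap.one_apply]
          rw [this, hA, hlam1]
        rw [e1, e2, ih, pow_succ]
        ring
    set ζ : ℂ := Complex.exp (2 * Real.pi * Complex.I / (k+1)) with hζdef
    have hζ : IsPrimitiveRoot ζ (k+1) := by
      have := Complex.isPrimitiveRoot_exp (k+1) (Nat.succ_ne_zero k)
      simpa [hζdef] using this
    have hfact : (Polynomial.X ^ (k+1) - Polynomial.C (ε ^ (k+1)) : Polynomial ℂ)
        = ((((Finset.range (k+1)).val.map (fun i => ζ ^ i * ε)).map
            (fun r => Polynomial.X - Polynomial.C r)).prod) := by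
      rw [Multiset.map_map]
      rw [X_pow_sub_C_eq_prod hζ (Nat.succ_pos k) rfl]
      rw [Finset.prod_eq_multiset_prod]
      simp [Function.comp]
    have heval : pb ((B ^ (k+1) - ε ^ (k+1) • 1) x)
        = (∏ i ∈ Finset.range (k+1), h (lam1 + ζ ^ i * ε)) * pb x := by
      have e1 : (B ^ (k+1) - ε ^ (k+1) • (1 : E →L[ℂ] E))
          = Polynomial.aeval B (Polynomial.X ^ (k+1) - Polynomial.C (ε ^ (k+1))) := by
        simp [Algebra.algebraMap_eq_smul_one, smul_pow, one_pow]
      rw [e1, hfact, aux_KL pb B (fun r => h (lam1 + r)) hAop]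
      congr 1
      rw [Multiset.map_map, Finset.prod_eq_multiset_prod]
      simp [Function.comp]
    have hub : pb ((B ^ (k+1) - ε ^ (k+1) • 1) x) ≤ (m ^ (k+1) + ‖ε‖ ^ (k+1)) * pb x := by
      have e1 : (B ^ (k+1) - ε ^ (k+1) • (1 : E →L[ℂ] E)) x = (B ^ (k+1)) x - ε ^ (k+1) • x := rfl
      rw [e1, sub_eq_add_neg]
      calc pb ((B ^ (k+1)) x + -(ε ^ (k+1) • x))
          ≤ pb ((B ^ (k+1)) x) + pb (-(ε ^ (k+1) • x)) := map_add_le_add pb _ _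
        _ = m ^ (k+1) * pb x + ‖ε‖ ^ (k+1) * pb x := by
            rw [map_neg_eq_map, hpow, map_smul_eq_mul, norm_pow]
        _ = (m ^ (k+1) + ‖ε‖ ^ (k+1)) * pb x := by ring
    have hlb : h μ * m ^ k * pb x ≤ pb ((B ^ (k+1) - ε ^ (k+1) • 1) x) := by
      rw [heval]
      have h0mem : (0 : ℕ) ∈ Finset.range (k+1) := by simp
      have hsplit : h (lam1 + ζ ^ 0 * ε) * ∏ i ∈ (Finset.range (k+1)).erase 0, h (lam1 + ζ ^ i * ε)
          = ∏ i ∈ Finset.range (k+1), h (lam1 + ζ ^ i * ε) :=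
        Finset.mul_prod_erase _ (fun i => h (lam1 + ζ ^ i * ε)) h0mem
      have hμeq : lam1 + ζ ^ 0 * ε = μ := by
        rw [pow_zero, one_mul, hε]; ring
      have hprodlb : m ^ k ≤ ∏ i ∈ (Finset.range (k+1)).erase 0, h (lam1 + ζ ^ i * ε) := by
        have hcard : ((Finset.range (k+1)).erase 0).card = k := by
          rw [Finset.card_erase_of_mem h0mem, Finset.card_range]
          omega
        calc m ^ k = ∏ _i ∈ (Finset.range (k+1)).erase 0, m := by rw [Finset.prod_const, hcard]
          _ ≤ _ := Finset.prod_le_prod (fun _ _ => hmpos.le) (fun i _ => hmin _)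
      calc h μ * m ^ k * pb x
          ≤ h μ * (∏ i ∈ (Finset.range (k+1)).erase 0, h (lam1 + ζ ^ i * ε)) * pb x := by
            exact mul_le_mul_of_nonneg_right
              (by linarith [mul_le_mul_of_nonneg_left hprodlb (hnonneg μ)]) hx.le
        _ = (∏ i ∈ Finset.range (k+1), h (lam1 + ζ ^ i * ε)) * pb x := by
            rw [← hsplit, hμeq]
    have := hlb.trans hub
    exact le_of_mul_le_mul_right (by linarith) hx
  set Sset : Set ℂ := {μ | h μ = m} with hSset
  have hSclosed : IsClosed Sset := isClosed_eq hcont continuous_const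
  have hSopen : IsOpen Sset := by
    rw [Metric.isOpen_iff]
    intro lam1 hlam1
    refine ⟨m, hmpos, ?_⟩
    intro μ hμ
    rw [Metric.mem_ball, dist_eq_norm] at hμ
    set r : ℝ := ‖μ - lam1‖ / m with hr
    have hr0 : 0 ≤ r := div_nonneg (norm_nonneg _) hmpos.le
    have hr1 : r < 1 := (div_lt_one hmpos).mpr hμ
    have hkey : ∀ k : ℕ, h μ ≤ m + m * r ^ (k+1) := by
      intro k
      have hb := hbound lam1 μ hlam1 k
      have hmk : (0:ℝ) < m ^ k := pow_pos hmpos k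
      rw [← le_div_iff₀ hmk] at hb
      calc h μ ≤ (m ^ (k+1) + ‖μ - lam1‖ ^ (k+1)) / m ^ k := hb
        _ = m + m * r ^ (k+1) := by
            rw [hr]
            field_simp
            have hmk1 : m ^ k * m ≠ 0 := by positivity
            rw [div_pow, pow_succ m k, mul_add, mul_one, ← mul_div_assoc,
              mul_div_cancel_left₀ _ hmk1]
    have htend : Filter.Tendsto (fun k : ℕ => m + m * r ^ (k+1)) Filter.atTop (nhds m) := by
      have h1 : Filter.Tendsto (fun k : ℕ => r ^ (k+1)) Filter.atTop (nhds 0) := by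
        have := tendsto_pow_atTop_nhds_zero_of_lt_one hr0 hr1
        exact this.comp (Filter.tendsto_add_atTop_nat 1)
      have h2 := (h1.const_mul m).const_add m
      simpa using h2
    have hle : h μ ≤ m := ge_of_tendsto' htend hkey
    exact le_antisymm hle (hmin μ)
  have hSne : Sset.Nonempty := ⟨lam0, rfl⟩
  have huniv : Sset = Set.univ := IsClopen.eq_univ ⟨hSclosed, hSopen⟩ hSne
  set μbig : ℂ := ((m + K + 1 : ℝ) : ℂ) with hμbig
  have h1 : h μbig = m := by
    have : μbig ∈ Sset := huniv ▸ Set.mem_univ μbig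
    exact this
  have h2 : ‖μbig‖ - K ≤ h μbig := hcoer μbig
  have hK0 : 0 ≤ K := div_nonneg (apply_nonneg pb _) hx.le
  have h3 : ‖μbig‖ = m + K + 1 := by
    rw [hμbig, Complex.norm_real, Real.norm_eq_abs, abs_of_nonneg (by linarith)]
  rw [h1, h3] at h2
  linarith

end AuxLemmas

/-- If `dim X ≥ 2` and `T` is doubly power bounded, then `T` is not supercyclic. -/
theorem stmt_5 (X : Type*) [AddCommGroup X] [Module ℂ X] [Module ℝ X]
    [IsScalarTower ℝ ℂ X] [TopologicalSpace X] [IsTopologicalAddGroup X]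
    [ContinuousSMul ℂ X] [T2Space X] [LocallyConvexSpace ℝ X]
    (hdim : 2 ≤ Module.rank ℂ X) (T : X →L[ℂ] X) (hbij : Function.Bijective T)
    (hdpb : ∃ S : X →L[ℂ] X, (∀ x, S (T x) = x) ∧ (∀ x, T (S x) = x) ∧
      ∀ q : Seminorm ℂ X, Continuous q → ∃ p : Seminorm ℂ X, Continuous p ∧
        (∀ (n : ℕ) (x : X), q ((T ^ n) x) ≤ p x) ∧
        (∀ (n : ℕ) (x : X), q ((S ^ n) x) ≤ p x)) :
    ¬ ∃ x : X, Dense {y : X | ∃ (c : ℂ) (n : ℕ), y = c • (T ^ n) x} := by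
  rintro ⟨x, hdense⟩
  obtain ⟨S, hST, hTS, hq⟩ := hdpb
  set e : X ≃L[ℂ] X := ContinuousLinearEquiv.equivOfInverse T S hST hTS with he
  -- the ℤ-powers of `e` are among the powers of `T` and `S`
  have hTpow : ∀ (n : ℕ) (y : X), (e ^ n) y = (T ^ n) y := by
    intro n
    induction n with
    | zero => intro y; rfl
    | succ n ih =>
      intro y
      have h1 : (e ^ (n+1)) y = e ((e ^ n) y) := by rw [pow_succ']; rfl
      have h2 : (T ^ (n+1)) y = T ((T ^ n) y) := by rw [pow_succ']; rfl
      rw [h1, h2, ih]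
      rfl
  have hSpow : ∀ (n : ℕ) (y : X), (e⁻¹ ^ n) y = (S ^ n) y := by
    intro n
    induction n with
    | zero => intro y; rfl
    | succ n ih =>
      intro y
      have h1 : (e⁻¹ ^ (n+1)) y = e⁻¹ ((e⁻¹ ^ n) y) := by rw [pow_succ']; rfl
      have h2 : (S ^ (n+1)) y = S ((S ^ n) y) := by rw [pow_succ']; rfl
      rw [h1, h2, ih]
      rfl
  have hAll : ∀ (k : ℤ) (y : X), ∃ n : ℕ, (e ^ k) y = (T ^ n) y ∨ (e ^ k) y = (S ^ n) y := by
    intro k y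
    cases k with
    | ofNat n =>
      refine ⟨n, Or.inl ?_⟩
      rw [Int.ofNat_eq_coe, zpow_natCast]
      exact hTpow n y
    | negSucc n =>
      refine ⟨n + 1, Or.inr ?_⟩
      rw [zpow_negSucc, ← inv_pow]
      exact hSpow (n+1) y
  -- the subspace spanned by x is closed
  have hspan_closed : IsClosed ((Submodule.span ℂ ({x} : Set X)) : Set X) := by
    haveI : FiniteDimensional ℂ (Submodule.span ℂ ({x} : Set X)) :=
      FiniteDimensional.span_of_finite ℂ (Set.finite_singleton x)
    exact Submodule.closed_of_finiteDimensional _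
  -- final contradiction once everything lands in the span of x
  have hfinal : ¬ (∀ y ∈ {y : X | ∃ (c : ℂ) (n : ℕ), y = c • (T ^ n) x},
      y ∈ ((Submodule.span ℂ ({x} : Set X)) : Set X)) := by
    intro hsub
    have hcl : closure {y : X | ∃ (c : ℂ) (n : ℕ), y = c • (T ^ n) x}
        ⊆ ((Submodule.span ℂ ({x} : Set X)) : Set X) :=
      closure_minimal hsub hspan_closed
    have hall : ∀ y : X, y ∈ Submodule.span ℂ ({x} : Set X) := by
      intro y
      apply hcl
      rw [hdense.closure_eq]
      trivial
    have htop : Submodule.span ℂ ({x} : Set X) = ⊤ := by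
      rw [Submodule.eq_top_iff']
      exact hall
    have h2 := rank_span_le (R := ℂ) ({x} : Set X)
    rw [htop, rank_top] at h2
    simp only [Cardinal.mk_fintype, Set.card_singleton, Nat.cast_one] at h2
    have : (2 : Cardinal) ≤ 1 := hdim.trans h2
    norm_num at this
  -- case x = 0
  by_cases hx0 : x = 0
  · apply hfinal
    rintro y ⟨c, n, rfl⟩
    rw [hx0]
    simp
  -- x ≠ 0 : get a continuous seminorm not vanishing at x
  obtain ⟨q0, hq0c, hq0x⟩ := aux_seminorm_separation (E := X) hx0
  -- build the invariant continuous seminorm pb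
  have hmk : ∀ (q : Seminorm ℂ X), Continuous ⇑q →
      ∃ Q : Seminorm ℂ X, Continuous ⇑Q ∧ (∀ y, q y ≤ Q y) ∧ (∀ y, Q (T y) = Q y) := by
    intro q hqc
    obtain ⟨p, hpc, hpT, hpS⟩ := hq q hqc
    have hb : ∀ (k : ℤ) (y : X), q ((e ^ k) y) ≤ p y := by
      intro k y
      obtain ⟨n, hn | hn⟩ := hAll k y
      · rw [hn]; exact hpT n y
      · rw [hn]; exact hpS n y
    obtain ⟨Q, hQc, hQge, hQinv⟩ := aux_invariant_seminorm e q p hpc hb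
    exact ⟨Q, hQc, hQge, fun y => hQinv y⟩
  obtain ⟨pb, hpbc, hpbge, hpbinv⟩ := hmk q0 hq0c
  have hpbx : 0 < pb x :=
    lt_of_lt_of_le (lt_of_le_of_ne (apply_nonneg q0 x) (Ne.symm hq0x)) (hpbge x)
  -- the function h
  set h : ℂ → ℝ := fun μ => pb (T x - μ • x) / pb x with hh
  have hA : ∀ (μ : ℂ) (y : X), pb (T y - μ • y) = h μ * pb y := by
    intro μ y
    -- the seminorm y ↦ pb (T y - μ y) is continuous and T-invariant
    set L : X →ₗ[ℂ] X := (T - μ • (1 : X →L[ℂ] X)).toLinearMap with hL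
    set rr : Seminorm ℂ X := pb.comp L with hrr
    have hrr_apply : ∀ w, rr w = pb (T w - μ • w) := by
      intro w
      show pb (L w) = pb (T w - μ • w)
      congr 1
    have hrrc : Continuous ⇑rr := by
      have : ⇑rr = ⇑pb ∘ ⇑(T - μ • (1 : X →L[ℂ] X)) := rfl
      rw [this]
      exact hpbc.comp (T - μ • (1 : X →L[ℂ] X)).continuous
    have hrrT : ∀ w, rr (T w) = rr w := by
      intro w
      rw [hrr_apply, hrr_apply]
      have e1 : T (T w) - μ • T w = T (T w - μ • w) := by
        rw [map_sub, map_smul]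
      rw [e1, hpbinv]
    have := aux_prop T x hdense rr pb hrrc hpbc hrrT hpbinv y
    rw [hrr_apply, hrr_apply] at this
    rw [hh]
    field_simp
    linarith [this]
  obtain ⟨lam, hlam⟩ := aux_exists_root pb hpbc T x hpbx h hA
  -- pb (T y - lam y) = 0 for all y
  have hzero : ∀ y : X, pb (T y - lam • y) = 0 := by
    intro y
    rw [hA, hlam, zero_mul]
  -- hence T y = lam • y for all y
  have hTy : ∀ y : X, T y = lam • y := by
    intro y
    by_contra hne
    have hwne : T y - lam • y ≠ 0 := sub_ne_zero.mpr hne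
    obtain ⟨q, hqc, hqw⟩ := aux_seminorm_separation (E := X) hwne
    obtain ⟨Q, hQc, hQge, hQinv⟩ := hmk q hqc
    -- proportionality between Q and pb
    have hp := aux_prop T x hdense Q pb hQc hpbc hQinv hpbinv (T y - lam • y)
    rw [hzero y, zero_mul] at hp
    have hQw : Q (T y - lam • y) = 0 := by
      have := mul_eq_zero.mp hp
      rcases this with h1 | h1
      · exact h1
      · exact absurd h1 hpbx.ne'
    have : q (T y - lam • y) = 0 :=
      le_antisymm (hQw ▸ hQge _) (apply_nonneg q _)
    exact hqw this
  -- now every element of the orbit is a multiple of x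
  apply hfinal
  rintro y ⟨c, n, rfl⟩
  have hTn : ∀ n : ℕ, (T ^ n) x = lam ^ n • x := by
    intro n
    induction n with
    | zero => simp
    | succ n ih =>
      have h1 : (T ^ (n+1)) x = T ((T ^ n) x) := by rw [pow_succ']; rfl
      rw [h1, ih, hTy, smul_smul, ← pow_succ']
  rw [hTn n, smul_smul]
  exact Submodule.mem_span_singleton.mpr ⟨c * lam ^ n, rfl⟩
end

section
/- Let θ ∈ ℂ with |θ| = 1 and let C_φ : H(𝔻) → H(𝔻) be the composition operator C_φ f = f ∘ φ with φ(z) = θ z on the space of holomorphic functions on the open unit disk with the compact-open topology. Then for every k ∈ ℕ and every f ∈ H(𝔻), sup_{|z| ≤ 1 − 1/k} |C_φ f(z)| = sup_{|z| ≤ 1 − 1/k} |f(z)|; consequently C_φ is a bijective operator with (C_φ^n)_{n∈ℤ} equicontinuous, and C_φ is not supercyclic. -/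
open Metric

private lemma unit_mul_image (u : ℂ) (hu : ‖u‖ = 1) (r : ℝ) :
    (fun z => u * z) '' closedBall (0:ℂ) r = closedBall (0:ℂ) r := by
  have hu0 : u ≠ 0 := by intro h; simp [h] at hu
  ext w
  simp only [Set.mem_image, mem_closedBall, Complex.dist_eq, sub_zero]
  constructor
  · rintro ⟨z, hz, rfl⟩; simpa [norm_mul, hu] using hz
  · intro hw
    exact ⟨u⁻¹ * w, by simpa [norm_mul, norm_inv, hu] using hw, by field_simp⟩

private lemma abs_image_rot (u : ℂ) (hu : ‖u‖ = 1) (r : ℝ) (f : ℂ → ℂ) :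
    ((fun z => ‖f (u * z)‖) '' closedBall (0:ℂ) r)
      = ((fun z => ‖f z‖) '' closedBall (0:ℂ) r) := by
  have h : (fun z => ‖f (u * z)‖)
      = (fun z => ‖f z‖) ∘ (fun z => u * z) := rfl
  rw [h, Set.image_comp, unit_mul_image u hu r]

private lemma diff_rot (u : ℂ) (hu : ‖u‖ = 1) (f : ℂ → ℂ)
    (hf : DifferentiableOn ℂ f (ball (0:ℂ) 1)) :
    DifferentiableOn ℂ (fun z => f (u * z)) (ball (0:ℂ) 1) := by
  apply hf.comp ((differentiable_id.const_mul u).differentiableOn)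
  intro z hz
  simp only [mem_ball, Complex.dist_eq, sub_zero, id] at *
  calc ‖u * z‖ = ‖z‖ := by simp [norm_mul, hu]
  _ < 1 := hz

private lemma pointwise_lt {h : ℂ → ℂ} (hcont : ContinuousOn h (closedBall (0:ℂ) (1/2)))
    {ε : ℝ} (hs : sSup ((fun z => ‖h z‖) '' closedBall (0:ℂ) (1/2)) < ε)
    {z : ℂ} (hz : z ∈ closedBall (0:ℂ) (1/2)) : ‖h z‖ < ε :=
  lt_of_le_of_lt (le_csSup ((isCompact_closedBall _ _).image_of_continuousOn
    (continuous_norm.comp_continuousOn hcont)).bddAbove ⟨z, hz, rfl⟩) hs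

/-- For a rotation `φ(z) = θ z` with `|θ| = 1`, the composition operator
`C_φ f = f ∘ φ` on `H(𝔻)` preserves each seminorm `p_k f = sup_{|z| ≤ 1 - 1/k} |f z|`;
consequently `C_φ` is bijective on `H(𝔻)`, its integer powers are `Γ`-isometries (hence
`(C_φ^n)_{n ∈ ℤ}` is equicontinuous), and `C_φ` is not supercyclic. -/
theorem stmt_14 (θ : ℂ) (hθ : ‖θ‖ = 1)
    (H : Set (ℂ → ℂ)) (hH : H = {f | DifferentiableOn ℂ f (ball (0 : ℂ) 1)})
    (p : ℕ → (ℂ → ℂ) → ℝ)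
    (hp : ∀ (k : ℕ) (f : ℂ → ℂ),
      p k f = sSup ((fun z => ‖f z‖) '' closedBall (0 : ℂ) (1 - 1 / (k + 1))))
    (C : (ℂ → ℂ) → (ℂ → ℂ)) (hC : ∀ (f : ℂ → ℂ) (z : ℂ), C f z = f (θ * z)) :
    (∀ (k : ℕ) (f : ℂ → ℂ), f ∈ H → p k (C f) = p k f) ∧
    Set.BijOn C H H ∧
    (∀ (k : ℕ) (n : ℤ) (f : ℂ → ℂ), f ∈ H → p k (fun z => f (θ ^ n * z)) = p k f) ∧
    ¬ ∃ f ∈ H, ∀ g ∈ H, ∀ (k : ℕ), ∀ ε > (0 : ℝ), ∃ (c : ℂ) (n : ℕ),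
        p k (fun z => c * f (θ ^ n * z) - g z) < ε := by
  subst hH
  have hθ0 : θ ≠ 0 := by intro h; simp [h] at hθ
  refine ⟨?_, ⟨?_, ?_, ?_⟩, ?_, ?_⟩
  · -- seminorm preservation
    intro k f _
    rw [hp, hp]
    congr 1
    have h : (fun z => ‖C f z‖) = fun z => ‖f (θ * z)‖ := by
      funext z; rw [hC]
    rw [h, abs_image_rot θ hθ]
  · -- MapsTo
    intro f hf
    have h : C f = fun z => f (θ * z) := funext (hC f)
    show DifferentiableOn ℂ (C f) _
    rw [h]
    exact diff_rot θ hθ f hf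
  · -- InjOn
    intro f _ g _ hfg
    funext z
    have h := congrFun hfg (θ⁻¹ * z)
    rw [hC, hC, ← mul_assoc, mul_inv_cancel₀ hθ0, one_mul] at h
    exact h
  · -- SurjOn
    intro g hg
    refine ⟨fun z => g (θ⁻¹ * z), ?_, ?_⟩
    · exact diff_rot θ⁻¹ (by rw [norm_inv, hθ, inv_one]) g hg
    · funext z
      rw [hC, ← mul_assoc, inv_mul_cancel₀ hθ0, one_mul]
  · -- integer powers
    intro k n f _
    rw [hp, hp]
    congr 1
    exact abs_image_rot (θ ^ n) (by rw [norm_zpow, hθ, one_zpow]) _ f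
  · -- not supercyclic
    rintro ⟨f, hf, hsup⟩
    have hg1 : (fun _ : ℂ => (1:ℂ)) ∈ {f | DifferentiableOn ℂ f (ball (0 : ℂ) 1)} :=
      differentiableOn_const 1
    have hg2 : (fun z : ℂ => (8:ℂ) * z) ∈ {f | DifferentiableOn ℂ f (ball (0 : ℂ) 1)} :=
      (differentiable_id.const_mul (8:ℂ)).differentiableOn
    obtain ⟨c, n, h1⟩ := hsup _ hg1 1 (1/2) (by norm_num)
    obtain ⟨c', n', h2⟩ := hsup _ hg2 1 (1/2) (by norm_num)
    have hr : (1 : ℝ) - 1 / ((1:ℕ) + 1) = 1/2 := by norm_num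
    rw [hp, hr] at h1 h2
    have habs : ∀ m : ℕ, ‖θ ^ m‖ = 1 := fun m => by rw [norm_pow, hθ, one_pow]
    have hsub : closedBall (0:ℂ) (1/2) ⊆ ball (0:ℂ) 1 :=
      closedBall_subset_ball (by norm_num)
    have hc1 : ContinuousOn (fun z => c * f (θ ^ n * z) - 1) (closedBall (0:ℂ) (1/2)) :=
      (((diff_rot (θ ^ n) (habs n) f hf).const_mul c).sub
        (differentiableOn_const 1)).continuousOn.mono hsub
    have hc2 : ContinuousOn (fun z => c' * f (θ ^ n' * z) - 8 * z) (closedBall (0:ℂ) (1/2)) :=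
      (((diff_rot (θ ^ n') (habs n') f hf).const_mul c').sub
        ((differentiable_id.const_mul (8:ℂ)).differentiableOn)).continuousOn.mono hsub
    -- points
    set w₀ : ℂ := θ ^ n' * (1/2 : ℂ) with hw₀
    have hw₀abs : ‖w₀‖ = 1/2 := by
      rw [hw₀, norm_mul, habs n', one_mul]; simp
    have hz0 : (0:ℂ) ∈ closedBall (0:ℂ) (1/2) := mem_closedBall_self (by norm_num)
    have hzhalf : (1/2 : ℂ) ∈ closedBall (0:ℂ) (1/2) := by
      simp only [mem_closedBall, Complex.dist_eq, sub_zero]; simp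
    have hz1 : (θ ^ n)⁻¹ * w₀ ∈ closedBall (0:ℂ) (1/2) := by
      simp only [mem_closedBall, Complex.dist_eq, sub_zero, norm_mul, norm_inv,
        habs n, inv_one, one_mul, hw₀abs]
      norm_num
    have hθn0 : (θ : ℂ) ^ n ≠ 0 := pow_ne_zero _ hθ0
    -- four inequalities
    have e1 : ‖c * f 0 - 1‖ < 1/2 := by
      have := pointwise_lt hc1 h1 hz0
      simpa using this
    have e2 : ‖c * f w₀ - 1‖ < 1/2 := by
      have := pointwise_lt hc1 h1 hz1
      rwa [mul_inv_cancel_left₀ hθn0] at this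
    have e3 : ‖c' * f 0‖ < 1/2 := by
      have := pointwise_lt hc2 h2 hz0
      simpa using this
    have e4 : ‖c' * f w₀ - 4‖ < 1/2 := by
      have := pointwise_lt hc2 h2 hzhalf
      rw [hw₀]
      rwa [show (8:ℂ) * (1/2:ℂ) = 4 by norm_num] at this
    have tri : ∀ a b : ℂ, |‖a‖ - ‖b‖| ≤ ‖a - b‖ :=
      fun a b => abs_norm_sub_norm_le a b
    have b1 := abs_lt.mp (lt_of_le_of_lt (by simpa using tri (c * f 0) 1) e1)
    have b2 := abs_lt.mp (lt_of_le_of_lt (by simpa using tri (c * f w₀) 1) e2)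
    have b4 := abs_lt.mp (lt_of_le_of_lt (by simpa using tri (c' * f w₀) 4) e4)
    rw [norm_mul] at e3
    have eq : ‖c‖ * ‖f 0‖ * (‖c'‖ * ‖f w₀‖)
        = ‖c‖ * ‖f w₀‖ * (‖c'‖ * ‖f 0‖) := by ring
    have n2 : (0:ℝ) ≤ ‖c‖ * ‖f w₀‖ :=
      mul_nonneg (norm_nonneg _) (norm_nonneg _)
    have n3 : (0:ℝ) ≤ ‖c'‖ * ‖f 0‖ :=
      mul_nonneg (norm_nonneg _) (norm_nonneg _)
    have P1 : 7/4 < ‖c‖ * ‖f 0‖ * (‖c'‖ * ‖f w₀‖) := by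
      nlinarith [b1.1, b4.1]
    have P2 : ‖c‖ * ‖f w₀‖ * (‖c'‖ * ‖f 0‖) < 3/4 := by
      nlinarith [b2.2, e3, n2, n3]
    linarith [P1, P2, eq]
end
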